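/- For every real x, the series ∑_{n=0}^∞ ((−1)^(n−1) xⁿ / n!) · (dⁿ/dxⁿ arctan)(x), whose n = 0 term is −arctan(x), converges and its sum equals 0. -/

import Mathlib

open Complex

private def arctanDom : Set ℂ := {z : ℂ | z.re ≠ 0} ∪ {z : ℂ | z.re ^ 2 + z.im ^ 2 < 1}

private lemma arctanDom_isOpen : IsOpen arctanDom :=
  ((isOpen_ne_fun (by fun_prop) (by fun_prop)).union (isOpen_lt (by fun_prop) (by fun_prop)))

private lemma arctanDom_den_ne {z : ℂ} (hz : z ∈ arctanDom) : 1 - z * I ≠ 0 := by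
  intro h
  rw [Complex.ext_iff] at h
  simp only [Complex.sub_re, Complex.one_re, Complex.mul_re, Complex.I_re, Complex.I_im,
    Complex.sub_im, Complex.one_im, Complex.mul_im, Complex.zero_re, Complex.zero_im] at h
  rcases hz with hz | hz
  · apply hz; simp only [Set.mem_setOf_eq] at *; nlinarith [h.1, h.2]
  · simp only [Set.mem_setOf_eq] at hz; nlinarith [h.1, h.2]

private lemma arctanDom_slit {z : ℂ} (hz : z ∈ arctanDom) :
    (1 + z * I) / (1 - z * I) ∈ slitPlane := by
  have hd := arctanDom_den_ne hz
  have hnsq : 0 < Complex.normSq (1 - z * I) := Complex.normSq_pos.mpr hd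
  have hre : ((1 + z * I) / (1 - z * I)).re
      = (1 - z.re ^ 2 - z.im ^ 2) / Complex.normSq (1 - z * I) := by
    rw [Complex.div_re]
    simp only [Complex.add_re, Complex.one_re, Complex.mul_re, Complex.I_re, Complex.I_im,
      Complex.add_im, Complex.one_im, Complex.mul_im, Complex.sub_re, Complex.sub_im]
    ring
  have him : ((1 + z * I) / (1 - z * I)).im
      = (2 * z.re) / Complex.normSq (1 - z * I) := by
    rw [Complex.div_im]
    simp only [Complex.add_re, Complex.one_re, Complex.mul_re, Complex.I_re, Complex.I_im,
      Complex.add_im, Complex.one_im, Complex.mul_im, Complex.sub_re, Complex.sub_im]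
    ring
  rw [Complex.mem_slitPlane_iff]
  rcases hz with hz | hz
  · right
    rw [him]
    simp only [Set.mem_setOf_eq] at hz
    positivity
  · left
    rw [hre]
    simp only [Set.mem_setOf_eq] at hz
    have : 0 < 1 - z.re ^ 2 - z.im ^ 2 := by linarith
    positivity

private lemma arctanDom_diff {z : ℂ} (hz : z ∈ arctanDom) :
    DifferentiableAt ℂ Complex.arctan z := by
  have h1 : DifferentiableAt ℂ (fun w : ℂ => (1 + w * I) / (1 - w * I)) z :=
    DifferentiableAt.div (by fun_prop) (by fun_prop) (arctanDom_den_ne hz)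
  have h2 := h1.clog (arctanDom_slit hz)
  exact (differentiableAt_const (-I / 2)).mul h2

private lemma arctanDom_analytic : AnalyticOnNhd ℂ Complex.arctan arctanDom :=
  DifferentiableOn.analyticOnNhd
    (fun z hz => (arctanDom_diff hz).differentiableWithinAt) arctanDom_isOpen

private lemma real_mem_arctanDom (t : ℝ) : (t : ℂ) ∈ arctanDom := by
  rcases eq_or_ne t 0 with h | h
  · right; simp [h]
  · left; simpa using h

private lemma iteratedDeriv_arctan_real (n : ℕ) (t : ℝ) :
    ((iteratedDeriv n Real.arctan t : ℝ) : ℂ) = iteratedDeriv n Complex.arctan (t : ℂ) := by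
  induction n generalizing t with
  | zero => simp [Complex.ofReal_arctan]
  | succ n ih =>
    have hg : AnalyticOnNhd ℂ (iteratedDeriv n Complex.arctan) arctanDom := by
      rw [iteratedDeriv_eq_iterate]
      exact arctanDom_analytic.iterated_deriv n
    have hd : HasDerivAt (iteratedDeriv n Complex.arctan)
        (iteratedDeriv (n + 1) Complex.arctan (t : ℂ)) (t : ℂ) := by
      rw [iteratedDeriv_succ]
      exact ((hg _ (real_mem_arctanDom t)).differentiableAt).hasDerivAt
    have h2 := hd.comp_ofReal
    have h3 : HasDerivAt (fun s : ℝ => ((iteratedDeriv n Real.arctan s : ℝ) : ℂ))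
        (iteratedDeriv (n + 1) Complex.arctan (t : ℂ)) t := by
      simpa only [ih] using h2
    have h4 : HasDerivAt (iteratedDeriv n Real.arctan)
        (iteratedDeriv (n + 1) Real.arctan t) t := by
      rw [iteratedDeriv_succ]
      exact ((Real.contDiff_arctan (n := (⊤ : WithTop ℕ∞)).differentiable_iteratedDeriv n
        (by simp)) t).hasDerivAt
    have h5 := h4.ofReal_comp (z := t)
    exact (h3.unique h5).symm

theorem arctan_deriv_series_zero (x : ℝ) :
    HasSum (fun n : ℕ =>
      ((-1) ^ (n + 1) * x ^ n / (Nat.factorial n : ℝ)) *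
        iteratedDeriv n Real.arctan x)
      0 := by
  set r : ℝ := Real.sqrt (1 + x ^ 2) with hr
  have hr2 : r ^ 2 = 1 + x ^ 2 := Real.sq_sqrt (by positivity)
  have hball : Metric.ball (x : ℂ) r ⊆ arctanDom := by
    intro z hz
    rw [Metric.mem_ball, Complex.dist_eq] at hz
    have habs2 : ‖z - ↑x‖ ^ 2 < r ^ 2 := by
      nlinarith [norm_nonneg (z - ↑x), Real.sqrt_nonneg (1 + x ^ 2)]
    rw [Complex.sq_norm, Complex.normSq_apply] at habs2
    simp only [Complex.sub_re, Complex.ofReal_re, Complex.sub_im, Complex.ofReal_im,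
      sub_zero] at habs2
    rw [hr2] at habs2
    rcases eq_or_ne z.re 0 with h | h
    · right
      simp only [Set.mem_setOf_eq, h]
      rw [h] at habs2
      nlinarith [habs2]
    · left
      simpa using h
  have hdiff : DifferentiableOn ℂ Complex.arctan (Metric.ball (x : ℂ) r) :=
    fun z hz => (arctanDom_diff (hball hz)).differentiableWithinAt
  have h0 : (0 : ℂ) ∈ Metric.ball (x : ℂ) r := by
    rw [Metric.mem_ball, Complex.dist_eq]
    have : ‖(0 : ℂ) - ↑x‖ = |x| := by
      simp [Complex.norm_real]
    rw [this]
    nlinarith [abs_nonneg x, _root_.sq_abs x, Real.sqrt_nonneg (1 + x ^ 2)]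
  have H := Complex.hasSum_taylorSeries_on_ball hdiff h0
  have harctan0 : Complex.arctan 0 = 0 := by
    simp [Complex.arctan]
  have hfun : ∀ n : ℕ, (n.factorial : ℂ)⁻¹ • (0 - (x : ℂ)) ^ n •
      iteratedDeriv n Complex.arctan (x : ℂ)
      = ((((-1) ^ n * x ^ n / n.factorial * iteratedDeriv n Real.arctan x : ℝ)) : ℂ) := by
    intro n
    rw [← iteratedDeriv_arctan_real n x]
    push_cast
    rw [smul_eq_mul, smul_eq_mul]
    ring
  simp only [hfun, harctan0] at H
  rw [show (0 : ℂ) = ((0 : ℝ) : ℂ) by norm_cast] at H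
  have H3 := Complex.hasSum_ofReal.mp H
  have H4 := H3.neg
  rw [neg_zero] at H4
  have heq : (fun n : ℕ => ((-1) ^ (n + 1) * x ^ n / (Nat.factorial n : ℝ)) *
      iteratedDeriv n Real.arctan x)
      = fun n : ℕ => -(((-1) ^ n * x ^ n / n.factorial) * iteratedDeriv n Real.arctan x) := by
    funext n
    ring
  rw [heq]
  exact H4
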